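/- Let T be a bounded totally paranormal operator and μ₁ ≠ μ₂ nonzero eigenvalues with |μ₁| = |μ₂|. Then for every x ∈ ker(T − μ₁I) and y ∈ ker(T − μ₂I), ‖y‖ ≤ ‖x + y‖. -/

import Mathlib

theorem stmt_18 {H : Type*} [NormedAddCommGroup H] [InnerProductSpace ℂ H]
    [CompleteSpace H] (T : H →L[ℂ] H)
    (hT : ∀ (lam : ℂ) (x : H),
      ‖(T - lam • 1) x‖ ^ 2 ≤ ‖((T - lam • 1) ∘L (T - lam • 1)) x‖ * ‖x‖)
    (μ₁ μ₂ : ℂ) (h1 : μ₁ ≠ 0) (h2 : μ₂ ≠ 0) (hne : μ₁ ≠ μ₂)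
    (habs : ‖μ₁‖ = ‖μ₂‖)
    (x y : H) (hx : T x = μ₁ • x) (hy : T y = μ₂ • y) :
    ‖y‖ ≤ ‖x + y‖ := by
  have e1 : (T - μ₁ • 1) (x + y) = (μ₂ - μ₁) • y := by
    simp only [ContinuousLinearMap.sub_apply, ContinuousLinearMap.smul_apply,
      ContinuousLinearMap.one_apply, map_add, hx, hy]
    module
  have e2 : ((T - μ₁ • 1) ∘L (T - μ₁ • 1)) (x + y) = ((μ₂ - μ₁) ^ 2) • y := by
    rw [ContinuousLinearMap.comp_apply, e1]
    simp only [ContinuousLinearMap.sub_apply, ContinuousLinearMap.smul_apply,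
      ContinuousLinearMap.one_apply, map_smul, hy]
    module
  have h := hT μ₁ (x + y)
  rw [e1, e2, norm_smul, norm_smul] at h
  have hc : (0 : ℝ) < ‖μ₂ - μ₁‖ := by
    rw [norm_pos_iff, sub_ne_zero]
    exact fun h => hne h.symm
  rcases eq_or_lt_of_le (norm_nonneg y) with h0 | h0
  · rw [← h0]; positivity
  · have h' : ‖μ₂ - μ₁‖ ^ 2 * (‖y‖ * ‖y‖) ≤ ‖μ₂ - μ₁‖ ^ 2 * (‖y‖ * ‖x + y‖) := by
      calc ‖μ₂ - μ₁‖ ^ 2 * (‖y‖ * ‖y‖) = (‖μ₂ - μ₁‖ * ‖y‖) ^ 2 := by ring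
        _ ≤ ‖(μ₂ - μ₁) ^ 2‖ * ‖y‖ * ‖x + y‖ := h
        _ = ‖μ₂ - μ₁‖ ^ 2 * (‖y‖ * ‖x + y‖) := by rw [norm_pow]; ring
    have := le_of_mul_le_mul_left h' (by positivity)
    exact le_of_mul_le_mul_left this h0
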